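/- Let B¹, Z¹, Z² be continuous real functions vanishing at 0 such that the asymptotic slopes at -∞ exist and are strictly increasing in the order B¹, Z¹, Z². Set B² = R(Z¹, B¹). Then D(D(Z², B²), D(Z¹, B¹)) = D(D(Z², Z¹), B¹). -/

import Mathlib

open Filter

/-- Queue length: `Q(Z,B)(y) = sup_{x ≤ y} [(B(y)-B(x)) - (Z(y)-Z(x))]`. -/
noncomputable def Qmap (Z B : ℝ → ℝ) (y : ℝ) : ℝ :=
  sSup ((fun x => (B y - B x) - (Z y - Z x)) '' Set.Iic y)

/-- Departure map: `D(Z,B)(y) = Z(y) + Q(Z,B)(y) - Q(Z,B)(0)`. -/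
noncomputable def Dmap (Z B : ℝ → ℝ) (y : ℝ) : ℝ :=
  Z y + Qmap Z B y - Qmap Z B 0

/-- Reflected-output map: `R(Z,B)(y) = B(y) + Q(Z,B)(0) - Q(Z,B)(y)`. -/
noncomputable def Rmap (Z B : ℝ → ℝ) (y : ℝ) : ℝ :=
  B y + Qmap Z B 0 - Qmap Z B y

namespace Stmt10Aux

noncomputable def runInf (F : ℝ → ℝ) (y : ℝ) : ℝ := sInf (F '' Set.Iic y)

def LBdd (F : ℝ → ℝ) : Prop := ∀ z : ℝ, ∃ b, ∀ x ≤ z, b ≤ F x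

lemma nonempty_img (F : ℝ → ℝ) (y : ℝ) : (F '' Set.Iic y).Nonempty :=
  ⟨F y, y, le_refl y, rfl⟩

lemma bdd_img {F : ℝ → ℝ} (hB : LBdd F) (y : ℝ) : BddBelow (F '' Set.Iic y) := by
  obtain ⟨b, hb⟩ := hB y
  exact ⟨b, by rintro t ⟨x, hx, rfl⟩; exact hb x hx⟩

lemma runInf_le {F : ℝ → ℝ} (hB : LBdd F) {x y : ℝ} (h : x ≤ y) : runInf F y ≤ F x :=
  csInf_le (bdd_img hB y) ⟨x, h, rfl⟩

lemma le_runInf {F : ℝ → ℝ} {c y : ℝ} (h : ∀ x ≤ y, c ≤ F x) : c ≤ runInf F y :=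
  le_csInf (nonempty_img F y) (by rintro t ⟨x, hx, rfl⟩; exact h x hx)

lemma runInf_anti {F : ℝ → ℝ} (hB : LBdd F) {x y : ℝ} (h : x ≤ y) :
    runInf F y ≤ runInf F x :=
  le_runInf (fun u hu => runInf_le hB (hu.trans h))

lemma lbdd_add_const {F : ℝ → ℝ} (hB : LBdd F) (c : ℝ) : LBdd (fun x => F x + c) :=
  fun z => by obtain ⟨b, hb⟩ := hB z; exact ⟨b + c, fun x hx => add_le_add_left (hb x hx) c⟩

lemma runInf_add_const {F : ℝ → ℝ} (hB : LBdd F) (c y : ℝ) :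
    runInf (fun x => F x + c) y = runInf F y + c := by
  refine le_antisymm ?_ (le_runInf fun x hx => add_le_add_left (runInf_le hB hx) c)
  have h2 : runInf (fun x => F x + c) y - c ≤ runInf F y :=
    le_runInf fun x hx => sub_le_iff_le_add.2 <| by
      simpa [add_comm] using runInf_le (lbdd_add_const hB c) hx
  linarith

lemma Qmap_eq {Z B : ℝ → ℝ} (hB : LBdd (fun x => B x - Z x)) (y : ℝ) :
    Qmap Z B y = (B y - Z y) - runInf (fun x => B x - Z x) y := by
  set F := fun x => B x - Z x with hF
  have hFy : B y - Z y = F y := rfl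
  rw [hFy]
  have himg : (fun x => (B y - B x) - (Z y - Z x)) '' Set.Iic y
      = (fun t => F y - t) '' (F '' Set.Iic y) := by
    rw [Set.image_image]
    apply Set.image_congr'
    intro x; simp only [hF]; ring
  rw [Qmap, himg]
  refine IsLUB.csSup_eq ⟨?_, ?_⟩ ((nonempty_img F y).image _)
  · rintro t ⟨s, hs, rfl⟩
    exact sub_le_sub_left (csInf_le (bdd_img hB y) hs) _
  · intro u hu
    have : F y - u ≤ runInf F y := le_csInf (nonempty_img F y) (by
      rintro t ht
      have := hu ⟨t, ht, rfl⟩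
      dsimp at this
      linarith)
    linarith


lemma split {f : ℝ → ℝ} (hf : Continuous f) (hBf : LBdd f) {z y : ℝ} (hzy : z ≤ y) :
    ∃ t, z ≤ t ∧ t ≤ y ∧ (∀ s, z ≤ s → s ≤ y → f t ≤ f s) ∧
      runInf f y = min (runInf f z) (f t) := by
  obtain ⟨t, htmem, htmin⟩ :=
    (isCompact_Icc (a := z) (b := y)).exists_isMinOn (Set.nonempty_Icc.2 hzy)
      (hf.continuousOn)
  refine ⟨t, htmem.1, htmem.2, fun s h1 h2 => htmin ⟨h1, h2⟩, le_antisymm ?_ ?_⟩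
  · exact le_min (runInf_anti hBf hzy) (runInf_le hBf htmem.2)
  · refine le_runInf fun x hx => ?_
    rcases le_total x z with h | h
    · exact (min_le_left _ _).trans (runInf_le hBf h)
    · exact (min_le_right _ _).trans (htmin ⟨h, hx⟩)

lemma record {f : ℝ → ℝ} (hf : Continuous f) (hBf : LBdd f) {w y v : ℝ}
    (hwy : w ≤ y) (h1 : runInf f y < v) (h2 : v ≤ runInf f w) :
    ∃ z, w ≤ z ∧ z ≤ y ∧ f z = v ∧ runInf f z = v := by
  set S : Set ℝ := {z | z ∈ Set.Icc w y ∧ ∀ u ≤ z, v ≤ f u} with hS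
  have hwS : w ∈ S := ⟨⟨le_rfl, hwy⟩, fun u hu => h2.trans (runInf_le hBf hu)⟩
  have hne : S.Nonempty := ⟨w, hwS⟩
  have hbdd : BddAbove S := ⟨y, fun s hs => hs.1.2⟩
  set z := sSup S with hz
  have hzw : w ≤ z := le_csSup hbdd hwS
  have hzy' : z ≤ y := csSup_le hne (fun s hs => hs.1.2)
  have hlt : ∀ u < z, v ≤ f u := by
    intro u hu
    obtain ⟨s, hsS, hus⟩ := exists_lt_of_lt_csSup hne hu
    exact hsS.2 u hus.le
  have hzS : z ∈ S := by
    refine ⟨⟨hzw, hzy'⟩, fun u hu => ?_⟩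
    rcases lt_or_eq_of_le hu with h | h
    · exact hlt u h
    · subst h
      -- v ≤ f u by left-continuity
      have : Tendsto f (nhdsWithin z (Set.Iio z)) (nhds (f z)) :=
        (hf.tendsto z).mono_left nhdsWithin_le_nhds
      refine ge_of_tendsto this ?_
      filter_upwards [self_mem_nhdsWithin] with s hs
      exact hlt s hs
  have hzlty : z < y := by
    rcases lt_or_eq_of_le hzy' with h | h
    · exact h
    · exfalso
      have : v ≤ runInf f y := le_runInf fun x hx => hzS.2 x (by rw [h]; exact hx)
      exact absurd (h1.trans_le this) (lt_irrefl _)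
  have hfz_le : f z ≤ v := by
    by_contra hcon
    push_neg at hcon
    have hopen : ∀ᶠ u in nhds z, v < f u := (hf.tendsto z).eventually (eventually_gt_nhds hcon)
    obtain ⟨δ, hδ, hball⟩ := Metric.eventually_nhds_iff.1 hopen
    set z' := min (z + δ / 2) y with hz'
    have hzz' : z < z' := lt_min (by linarith) hzlty
    have hz'S : z' ∈ S := by
      refine ⟨⟨hzw.trans hzz'.le, min_le_right _ _⟩, fun u hu => ?_⟩
      rcases le_or_gt u z with h | h
      · exact hzS.2 u h
      · refine (hball ?_).le
        rw [Real.dist_eq, abs_sub_lt_iff]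
        constructor
        · have : u ≤ z + δ / 2 := hu.trans (min_le_left _ _)
          linarith
        · linarith
    exact absurd (le_csSup hbdd hz'S) (not_le.2 hzz')
  have hfz : f z = v := le_antisymm hfz_le (hzS.2 z le_rfl)
  refine ⟨z, hzw, hzy', hfz, le_antisymm (by rw [← hfz]; exact runInf_le hBf le_rfl)
    (le_runInf fun u hu => hzS.2 u hu)⟩

lemma linear_bounds {F : ℝ → ℝ} {l : ℝ} (h : Tendsto (fun x => F x / x) atBot (nhds l))
    {ε : ℝ} (hε : 0 < ε) :
    ∃ M, M < 0 ∧ ∀ x ≤ M, (l + ε) * x ≤ F x ∧ F x ≤ (l - ε) * x := by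
  have h1 : ∀ᶠ x in atBot, |F x / x - l| < ε := by
    have := Metric.tendsto_nhds.1 h ε hε
    simpa [Real.dist_eq] using this
  obtain ⟨M0, hM0⟩ := eventually_atBot.1 h1
  refine ⟨min M0 (-1), lt_of_le_of_lt (min_le_right _ _) (by norm_num), fun x hx => ?_⟩
  have hx0 : x < 0 := lt_of_le_of_lt (hx.trans (min_le_right _ _)) (by norm_num)
  have habs := abs_sub_lt_iff.1 (hM0 x (hx.trans (min_le_left _ _)))
  constructor
  · have h2 : F x / x < l + ε := by linarith [habs.1]
    have := (div_lt_iff_of_neg hx0).1 h2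
    linarith
  · have h2 : l - ε < F x / x := by linarith [habs.2]
    have := (lt_div_iff_of_neg hx0).1 h2
    linarith

lemma lbdd_piece {F : ℝ → ℝ} {L M : ℝ} (hL : L ≤ 0) (hlin : ∀ x ≤ M, L * x ≤ F x)
    (hcpt : ∀ z, ∃ b, ∀ x, M ≤ x → x ≤ z → b ≤ F x) : LBdd F := by
  intro z
  obtain ⟨b, hb⟩ := hcpt z
  refine ⟨min (L * M) b, fun x hx => ?_⟩
  rcases le_total x M with h | h
  · have : L * M ≤ L * x := mul_le_mul_of_nonpos_left h hL
    exact (min_le_left _ _).trans (this.trans (hlin x h))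
  · exact (min_le_right _ _).trans (hb x h hx)

lemma cpt_of_continuous {F : ℝ → ℝ} (hF : Continuous F) (M : ℝ) :
    ∀ z, ∃ b, ∀ x, M ≤ x → x ≤ z → b ≤ F x := by
  intro z
  obtain ⟨b, hb⟩ := (isCompact_Icc (a := M) (b := z)).bddBelow_image hF.continuousOn
  exact ⟨b, fun x h1 h2 => hb ⟨x, ⟨h1, h2⟩, rfl⟩⟩

lemma star {f g : ℝ → ℝ} (hf : Continuous f)
    (hBf : LBdd f) (hBg : LBdd g)
    (hBp : LBdd (fun u => g u + runInf f u))
    (hBh : LBdd (fun x => f x - 2 * runInf f x + runInf (fun u => g u + runInf f u) x))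
    (hBm : LBdd (fun x => f x + runInf g x)) (y : ℝ) :
    runInf (fun x => f x + runInf g x) y
      = runInf f y + runInf
          (fun x => f x - 2 * runInf f x + runInf (fun u => g u + runInf f u) x) y := by
  set If := runInf f with hIf
  set Ig := runInf g with hIg
  set P := runInf (fun u => g u + If u) with hP
  set h := fun x => f x - 2 * If x + P x with hh
  set m := fun x => f x + Ig x with hm
  have hmx : ∀ x, m x = f x + Ig x := fun _ => rfl
  have hhx : ∀ x, h x = f x - 2 * If x + P x := fun _ => rfl
  have dirA : runInf m y ≤ If y + runInf h y := by
    have key : runInf m y - If y ≤ runInf h y := by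
      refine le_runInf fun z hz => ?_
      rw [hhx]
      have inner : runInf m y - If y - (f z - 2 * If z) ≤ P z := by
        refine le_runInf fun u hu => ?_
        show runInf m y - If y - (f z - 2 * If z) ≤ g u + If u
        obtain ⟨t, htz, hty, htmin, hsplit⟩ := split hf hBf hz
        have hIfu : If z ≤ If u := runInf_anti hBf hu
        have hIgz : Ig z ≤ g u := runInf_le hBg hu
        have hIgt : Ig t ≤ g u := runInf_le hBg (hu.trans htz)
        have hIm1 : runInf m y ≤ f z + Ig z := by
          have := runInf_le hBm hz
          rwa [hmx] at this
        have hIm2 : runInf m y ≤ f t + Ig t := by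
          have := runInf_le hBm hty
          rwa [hmx] at this
        have hfzz : If z ≤ f z := runInf_le hBf le_rfl
        rcases min_cases (If z) (f t) with ⟨heq, _⟩ | ⟨heq, hlt⟩ <;>
          rw [heq] at hsplit <;> linarith
      linarith
    linarith
  have dirB : If y + runInf h y ≤ runInf m y := by
    refine le_runInf fun x hx => ?_
    rw [hmx]
    have inner : If y + runInf h y - f x ≤ Ig x := by
      refine le_runInf fun w hw => ?_
      show If y + runInf h y - f x ≤ g w
      have hwy : w ≤ y := (hw.trans hx)
      have hIfyx : If y ≤ If x := runInf_anti hBf hx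
      have hIfxw : If x ≤ If w := runInf_anti hBf hw
      have hIfxfx : If x ≤ f x := runInf_le hBf le_rfl
      rcases le_or_gt (If w) (If y) with hcase | hcase
      · have h1 : runInf h y ≤ h x := runInf_le hBh hx
        rw [hhx] at h1
        have h2 : P x ≤ g w + If w := by
          have := runInf_le hBp hw
          exact this
        linarith
      · rcases le_or_gt (If w) (f x) with hc2 | hc2
        · obtain ⟨z, hwz, hzy, hfz, hIfz⟩ := record hf hBf hwy hcase le_rfl
          have h1 : runInf h y ≤ h z := runInf_le hBh hzy
          rw [hhx] at h1
          have h2 : P z ≤ g w + If w := runInf_le hBp hwz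
          linarith
        · have hv1 : If y < If w + If y - f x := by linarith
          have hv2 : If w + If y - f x ≤ If w := by
            have : If y ≤ f x := hIfyx.trans hIfxfx
            linarith
          obtain ⟨z, hwz, hzy, hfz, hIfz⟩ := record hf hBf hwy hv1 hv2
          have h1 : runInf h y ≤ h z := runInf_le hBh hzy
          rw [hhx] at h1
          have h2 : P z ≤ g w + If w := runInf_le hBp hwz
          linarith
    linarith
  exact le_antisymm dirA dirB

lemma lbdd_congr {F G : ℝ → ℝ} (h : ∀ x, F x = G x) (hB : LBdd F) : LBdd G := by
  have : F = G := funext h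
  rwa [this] at hB

lemma runInf_congr {F G : ℝ → ℝ} (h : ∀ x, F x = G x) (y : ℝ) :
    runInf F y = runInf G y := by rw [funext h]

lemma Dmap_eq {Z B : ℝ → ℝ} (hB : LBdd (fun x => B x - Z x)) (y : ℝ) :
    Dmap Z B y = B y - runInf (fun x => B x - Z x) y - (B 0 - Z 0)
      + runInf (fun x => B x - Z x) 0 := by
  rw [Dmap, Qmap_eq hB y, Qmap_eq hB 0]; ring

lemma Rmap_eq {Z B : ℝ → ℝ} (hB : LBdd (fun x => B x - Z x)) (y : ℝ) :
    Rmap Z B y = Z y + runInf (fun x => B x - Z x) y + (B 0 - Z 0)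
      - runInf (fun x => B x - Z x) 0 := by
  rw [Rmap, Qmap_eq hB y, Qmap_eq hB 0]; ring

lemma main {B1 Z1 Z2 f g : ℝ → ℝ}
    (hfdef : ∀ x, f x = B1 x - Z1 x) (hgdef : ∀ x, g x = Z1 x - Z2 x)
    (hB10 : B1 0 = 0) (hZ10 : Z1 0 = 0) (hZ20 : Z2 0 = 0)
    (hf : Continuous f)
    (hBf : LBdd f) (hBg : LBdd g)
    (hBp : LBdd (fun u => g u + runInf f u))
    (hBh : LBdd (fun x => f x - 2 * runInf f x + runInf (fun u => g u + runInf f u) x))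
    (hBm : LBdd (fun x => f x + runInf g x)) :
    Dmap (Dmap Z2 (Rmap Z1 B1)) (Dmap Z1 B1) = Dmap (Dmap Z2 Z1) B1 := by
  have hf0 : f 0 = 0 := by rw [hfdef 0, hB10, hZ10]; ring
  have hg0 : g 0 = 0 := by rw [hgdef 0, hZ10, hZ20]; ring
  have ef : (fun x => B1 x - Z1 x) = f := (funext hfdef).symm
  have eg : (fun x => Z1 x - Z2 x) = g := (funext hgdef).symm
  have hBf1 : LBdd (fun x => B1 x - Z1 x) := by rw [ef]; exact hBf
  have hBg1 : LBdd (fun x => Z1 x - Z2 x) := by rw [eg]; exact hBg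
  -- D1
  have hD1 : ∀ t, Dmap Z1 B1 t = B1 t - runInf f t + runInf f 0 := by
    intro t
    have e := Dmap_eq hBf1 t
    rw [ef] at e
    rw [e, hB10, hZ10]; ring
  -- B2 = Rmap Z1 B1
  have hB2 : ∀ t, Rmap Z1 B1 t = Z1 t + runInf f t - runInf f 0 := by
    intro t
    have e := Rmap_eq hBf1 t
    rw [ef] at e
    rw [e, hB10, hZ10]; ring
  -- pair 2 : B2 - Z2 = (g + If) - If0
  have e2 : ∀ x, (fun u => g u + runInf f u) x + -(runInf f 0)
      = Rmap Z1 B1 x - Z2 x := by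
    intro x
    dsimp only
    rw [hB2 x, hgdef x]; ring
  have hBpair2 : LBdd (fun x => Rmap Z1 B1 x - Z2 x) :=
    lbdd_congr e2 (lbdd_add_const hBp (-(runInf f 0)))
  have hrun2 : ∀ t, runInf (fun x => Rmap Z1 B1 x - Z2 x) t
      = runInf (fun u => g u + runInf f u) t - runInf f 0 := by
    intro t
    rw [← runInf_congr e2 t, runInf_add_const hBp (-(runInf f 0)) t]; ring
  -- D2
  have hD2 : ∀ t, Dmap Z2 (Rmap Z1 B1) t
      = Z1 t + runInf f t - runInf (fun u => g u + runInf f u) t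
        - runInf f 0 + runInf (fun u => g u + runInf f u) 0 := by
    intro t
    have e := Dmap_eq hBpair2 t
    rw [e, hrun2 t, hrun2 0, hB2 t, hB2 0, hZ10, hZ20]; ring
  -- pair 3 : D1 - D2 = h + (2*If0 - P0)
  have e3 : ∀ x, (fun x => f x - 2 * runInf f x + runInf (fun u => g u + runInf f u) x) x
      + (2 * runInf f 0 - runInf (fun u => g u + runInf f u) 0)
      = Dmap Z1 B1 x - Dmap Z2 (Rmap Z1 B1) x := by
    intro x
    dsimp only
    rw [hD1 x, hD2 x, hfdef x]; ring
  have hBpair3 : LBdd (fun x => Dmap Z1 B1 x - Dmap Z2 (Rmap Z1 B1) x) :=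
    lbdd_congr e3 (lbdd_add_const hBh _)
  have hrun3 : ∀ t, runInf (fun x => Dmap Z1 B1 x - Dmap Z2 (Rmap Z1 B1) x) t
      = runInf (fun x => f x - 2 * runInf f x + runInf (fun u => g u + runInf f u) x) t
        + (2 * runInf f 0 - runInf (fun u => g u + runInf f u) 0) := by
    intro t
    rw [← runInf_congr e3 t, runInf_add_const hBh _ t]
  -- LHS
  have hLHS : ∀ t, Dmap (Dmap Z2 (Rmap Z1 B1)) (Dmap Z1 B1) t
      = B1 t - runInf f t + runInf f 0
        - runInf (fun x => f x - 2 * runInf f x + runInf (fun u => g u + runInf f u) x) t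
        + runInf (fun x => f x - 2 * runInf f x + runInf (fun u => g u + runInf f u) x) 0 := by
    intro t
    have e := Dmap_eq hBpair3 t
    rw [e, hrun3 t, hrun3 0, hD1 t, hD1 0, hD2 0, hB10, hZ10]; ring
  -- D4
  have hD4 : ∀ t, Dmap Z2 Z1 t = Z1 t - runInf g t + runInf g 0 := by
    intro t
    have e := Dmap_eq hBg1 t
    rw [eg] at e
    rw [e, hZ10, hZ20]; ring
  -- pair 5 : B1 - D4 = m - Ig0
  have e5 : ∀ x, (fun x => f x + runInf g x) x + -(runInf g 0)
      = B1 x - Dmap Z2 Z1 x := by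
    intro x
    dsimp only
    rw [hD4 x, hfdef x]; ring
  have hBpair5 : LBdd (fun x => B1 x - Dmap Z2 Z1 x) :=
    lbdd_congr e5 (lbdd_add_const hBm _)
  have hrun5 : ∀ t, runInf (fun x => B1 x - Dmap Z2 Z1 x) t
      = runInf (fun x => f x + runInf g x) t + -(runInf g 0) := by
    intro t
    rw [← runInf_congr e5 t, runInf_add_const hBm _ t]
  -- RHS
  have hRHS : ∀ t, Dmap (Dmap Z2 Z1) B1 t
      = B1 t - runInf (fun x => f x + runInf g x) t
        + runInf (fun x => f x + runInf g x) 0 := by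
    intro t
    have e := Dmap_eq hBpair5 t
    rw [e, hrun5 t, hrun5 0, hD4 0, hB10, hZ10]; ring
  funext t
  rw [hLHS t, hRHS t, star hf hBf hBg hBp hBh hBm t, star hf hBf hBg hBp hBh hBm 0]
  ring

lemma runInf_linear {F : ℝ → ℝ} {L M : ℝ} (hL : L ≤ 0) (hlin : ∀ x ≤ M, L * x ≤ F x) :
    ∀ x ≤ M, L * x ≤ runInf F x :=
  fun x hx => le_runInf fun u hu =>
    (mul_le_mul_of_nonpos_left hu hL).trans (hlin u (hu.trans hx))

end Stmt10Aux

open Stmt10Aux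

/-- for continuous `B¹, Z¹, Z²` vanishing at `0` with strictly increasing
asymptotic slopes at `-∞`, and `B² = R(Z¹,B¹)`,
`D(D(Z²,B²), D(Z¹,B¹)) = D(D(Z²,Z¹), B¹)`. -/
theorem stmt10 (B1 Z1 Z2 : ℝ → ℝ)
    (hB1 : Continuous B1) (hZ1 : Continuous Z1) (hZ2 : Continuous Z2)
    (hB10 : B1 0 = 0) (hZ10 : Z1 0 = 0) (hZ20 : Z2 0 = 0)
    (a b c : ℝ) (hab : a < b) (hbc : b < c)
    (ha : Tendsto (fun x => B1 x / x) atBot (nhds a))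
    (hb : Tendsto (fun x => Z1 x / x) atBot (nhds b))
    (hc : Tendsto (fun x => Z2 x / x) atBot (nhds c)) :
    Dmap (Dmap Z2 (Rmap Z1 B1)) (Dmap Z1 B1) = Dmap (Dmap Z2 Z1) B1 := by
  have hfc : Continuous fun x => B1 x - Z1 x := hB1.sub hZ1
  have hgc : Continuous fun x => Z1 x - Z2 x := hZ1.sub hZ2
  have hfa : Tendsto (fun x => (B1 x - Z1 x) / x) atBot (nhds (a - b)) := by
    simpa [sub_div] using ha.sub hb
  have hga : Tendsto (fun x => (Z1 x - Z2 x) / x) atBot (nhds (b - c)) := by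
    simpa [sub_div] using hb.sub hc
  set ε := min ((b - a) / 2) ((c - b) / 6) with hεdef
  have hε : 0 < ε := lt_min (by linarith) (by linarith)
  have hε1 : ε ≤ (b - a) / 2 := min_le_left _ _
  have hε2 : ε ≤ (c - b) / 6 := min_le_right _ _
  obtain ⟨Mf, hMf0, hMf⟩ := linear_bounds hfa hε
  obtain ⟨Mg, hMg0, hMg⟩ := linear_bounds hga hε
  have hLf : a - b + ε ≤ 0 := by linarith
  have hLg : b - c + ε ≤ 0 := by linarith
  have hBf : LBdd (fun x => B1 x - Z1 x) :=
    lbdd_piece hLf (fun x hx => (hMf x hx).1) (cpt_of_continuous hfc Mf)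
  have hBg : LBdd (fun x => Z1 x - Z2 x) :=
    lbdd_piece hLg (fun x hx => (hMg x hx).1) (cpt_of_continuous hgc Mg)
  have hIflin : ∀ x ≤ Mf, (a - b + ε) * x ≤ runInf (fun x => B1 x - Z1 x) x :=
    runInf_linear hLf (fun x hx => (hMf x hx).1)
  have hIfup : ∀ x ≤ Mf, runInf (fun x => B1 x - Z1 x) x ≤ (a - b - ε) * x :=
    fun x hx => (runInf_le hBf le_rfl).trans (hMf x hx).2
  have hIglin : ∀ x ≤ Mg, (b - c + ε) * x ≤ runInf (fun x => Z1 x - Z2 x) x :=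
    runInf_linear hLg (fun x hx => (hMg x hx).1)
  have hplinear : ∀ x ≤ min Mf Mg, ((b - c + ε) + (a - b + ε)) * x ≤
      (Z1 x - Z2 x) + runInf (fun x => B1 x - Z1 x) x := by
    intro x hx
    have h1 := (hMg x (hx.trans (min_le_right _ _))).1
    have h2 := hIflin x (hx.trans (min_le_left _ _))
    have : ((b - c + ε) + (a - b + ε)) * x = (b - c + ε) * x + (a - b + ε) * x := by ring
    rw [this]
    exact add_le_add h1 h2
  have hBp : LBdd (fun u => (Z1 u - Z2 u) + runInf (fun x => B1 x - Z1 x) u) := by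
    refine lbdd_piece (L := (b - c + ε) + (a - b + ε)) (M := min Mf Mg)
      (by linarith) hplinear ?_
    intro z
    obtain ⟨bg, hbg⟩ := cpt_of_continuous hgc (min Mf Mg) z
    exact ⟨bg + runInf (fun x => B1 x - Z1 x) z, fun x h1 h2 =>
      add_le_add (hbg x h1 h2) (runInf_anti hBf h2)⟩
  have hPlin : ∀ x ≤ min Mf Mg, ((b - c + ε) + (a - b + ε)) * x ≤
      runInf (fun u => (Z1 u - Z2 u) + runInf (fun x => B1 x - Z1 x) u) x :=
    runInf_linear (by linarith) hplinear
  have hBh : LBdd (fun x => (B1 x - Z1 x) - 2 * runInf (fun x => B1 x - Z1 x) x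
      + runInf (fun u => (Z1 u - Z2 u) + runInf (fun x => B1 x - Z1 x) u) x) := by
    refine lbdd_piece (L := (a - b + ε) - 2 * (a - b - ε) + ((b - c + ε) + (a - b + ε)))
      (M := min Mf Mg) (by linarith) ?_ ?_
    · intro x hx
      have h1 := (hMf x (hx.trans (min_le_left _ _))).1
      have h2 := hIfup x (hx.trans (min_le_left _ _))
      have h3 := hPlin x hx
      nlinarith [h1, h2, h3]
    · intro z
      obtain ⟨bf, hbf⟩ := cpt_of_continuous hfc (min Mf Mg) z
      refine ⟨bf - 2 * runInf (fun x => B1 x - Z1 x) (min Mf Mg)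
        + runInf (fun u => (Z1 u - Z2 u) + runInf (fun x => B1 x - Z1 x) u) z,
        fun x h1 h2 => ?_⟩
      have c1 := hbf x h1 h2
      have c2 : runInf (fun x => B1 x - Z1 x) x ≤ runInf (fun x => B1 x - Z1 x) (min Mf Mg) :=
        runInf_anti hBf h1
      have c3 : runInf (fun u => (Z1 u - Z2 u) + runInf (fun x => B1 x - Z1 x) u) z ≤
          runInf (fun u => (Z1 u - Z2 u) + runInf (fun x => B1 x - Z1 x) u) x :=
        runInf_anti hBp h2
      linarith
  have hBm : LBdd (fun x => (B1 x - Z1 x) + runInf (fun x => Z1 x - Z2 x) x) := by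
    refine lbdd_piece (L := (a - b + ε) + (b - c + ε)) (M := min Mf Mg)
      (by linarith) ?_ ?_
    · intro x hx
      have h1 := (hMf x (hx.trans (min_le_left _ _))).1
      have h2 := hIglin x (hx.trans (min_le_right _ _))
      have : ((a - b + ε) + (b - c + ε)) * x = (a - b + ε) * x + (b - c + ε) * x := by ring
      rw [this]
      exact add_le_add h1 h2
    · intro z
      obtain ⟨bf, hbf⟩ := cpt_of_continuous hfc (min Mf Mg) z
      exact ⟨bf + runInf (fun x => Z1 x - Z2 x) z, fun x h1 h2 =>
        add_le_add (hbf x h1 h2) (runInf_anti hBg h2)⟩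
  exact Stmt10Aux.main (fun x => rfl) (fun x => rfl) hB10 hZ10 hZ20 hfc hBf hBg hBp hBh hBm
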